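/- (Ruzsa triangle inequality for group actions) Let G act on X, let A₁, A₂ be nonempty finite subsets of G, and Y a finite subset of X. Then |A₁| · |A₂(Y)| ≤ |A₂A₁⁻¹| · |A₁(Y)|, where A(Y) = {g·y : g ∈ A, y ∈ Y} and A₂A₁⁻¹ = {a b⁻¹ : a ∈ A₂, b ∈ A₁}. -/

import Mathlib

open scoped Classical

theorem stmt2 {G X : Type*} [Group G] [MulAction G X]
    (A₁ A₂ : Finset G) (Y : Finset X) (h₁ : A₁.Nonempty) (h₂ : A₂.Nonempty) :
    A₁.card * ((A₂ ×ˢ Y).image (fun p => p.1 • p.2)).card ≤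
      ((A₂ ×ˢ A₁).image (fun p => p.1 * p.2⁻¹)).card *
        ((A₁ ×ˢ Y).image (fun p => p.1 • p.2)).card := by
  classical
  set B₂ := (A₂ ×ˢ Y).image (fun p : G × X => p.1 • p.2) with hB₂
  set B₁ := (A₁ ×ˢ Y).image (fun p : G × X => p.1 • p.2) with hB₁
  set D := (A₂ ×ˢ A₁).image (fun p : G × G => p.1 * p.2⁻¹) with hD
  have hch : ∀ z ∈ B₂, ∃ p : G × X, p.1 ∈ A₂ ∧ p.2 ∈ Y ∧ p.1 • p.2 = z := by
    intro z hz
    simp only [hB₂, Finset.mem_image, Finset.mem_product] at hz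
    obtain ⟨p, ⟨ha, hy⟩, hz⟩ := hz
    exact ⟨p, ha, hy, hz⟩
  choose f hf1 hf2 hf3 using hch
  have key : (A₁ ×ˢ B₂).card ≤ (D ×ˢ B₁).card := by
    apply Finset.card_le_card_of_injOn
      (fun q : G × X =>
        if h : q.2 ∈ B₂ then ((f q.2 h).1 * q.1⁻¹, q.1 • (f q.2 h).2) else q)
    · rintro ⟨a, z⟩ hq
      simp only [Finset.mem_coe, Finset.mem_product] at hq
      obtain ⟨ha, hz⟩ := hq
      simp only [dif_pos hz, Finset.mem_coe, Finset.mem_product]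
      constructor
      · exact Finset.mem_image.2 ⟨((f z hz).1, a), Finset.mem_product.2 ⟨hf1 z hz, ha⟩, rfl⟩
      · exact Finset.mem_image.2 ⟨(a, (f z hz).2), Finset.mem_product.2 ⟨ha, hf2 z hz⟩, rfl⟩
    · rintro ⟨a, z⟩ hq ⟨a', z'⟩ hq' heq
      simp only [Finset.mem_product, Finset.mem_coe] at hq hq'
      obtain ⟨ha, hz⟩ := hq
      obtain ⟨ha', hz'⟩ := hq'
      simp only [dif_pos hz, dif_pos hz', Prod.mk.injEq] at heq
      obtain ⟨e1, e2⟩ := heq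
      have hzz : z = z' := by
        have : ((f z hz).1 * a⁻¹) • (a • (f z hz).2)
            = ((f z' hz').1 * a'⁻¹) • (a' • (f z' hz').2) := by rw [e1, e2]
        rw [smul_smul, smul_smul, inv_mul_cancel_right, inv_mul_cancel_right,
          hf3 z hz, hf3 z' hz'] at this
        exact this
      subst hzz
      have haa : a = a' := by
        have := e1
        have := inv_injective (mul_left_cancel this)
        exact this
      simp [haa]
  simpa [Finset.card_product] using key
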